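/- (Multi-task market is robust to replication.) Let N be a finite set of M ≥ 1 parties, i ∈ N, i' ∉ N, N^R = N ∪ {i'}, and D ⊆ N. For each k ∈ N^R let g_k : Finset N^R → ℝ be nonnegative, monotone, and supermodular, with g_{i'} = g_i, and suppose every g_j satisfies the replica property with respect to {i, i'}: g_j(S ∪ {i}) = g_j(S ∪ {i'}) = g_j(S ∪ {i, i'}) for every S ⊆ N^R. Define w(S) = Σ_{j∈D} g_j(S) + Σ_{k∈S}(g_k(S) − g_k({k})), a_j = g_j(N) − g_j({j}) for j ∈ N, and A = Σ_{j∈N} a_j, and assume w(N) > 0. Let φ(i) be the normalized Shapley value of i computed from w on the market N, and φ^R(i) its normalized Shapley value computed from w on the market N^R. Then 2 · φ^R(i) · (A + a_i) ≤ φ(i) · A + a_i; i.e., party i's total payoff t^R = 2(φ^R(i)(A + a_i) − a_i) after replicating itself once does not exceed its payoff t = φ(i)A − a_i in the original market. -/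

import Mathlib

open Finset


private lemma coeff_split (M s : ℕ) (hs : s + 1 ≤ M) :
    (s.factorial : ℝ) * ((M - s).factorial : ℝ) / ((M + 1).factorial : ℝ)
      + ((s + 1).factorial : ℝ) * ((M - s - 1).factorial : ℝ) / ((M + 1).factorial : ℝ)
      = (s.factorial : ℝ) * ((M - s - 1).factorial : ℝ) / (M.factorial : ℝ) := by
  have h1 : M - s = (M - s - 1) + 1 := by omega
  rw [h1, Nat.factorial_succ, Nat.factorial_succ s, Nat.factorial_succ M]
  have hc : ((M - s - 1 : ℕ) : ℝ) = (M : ℝ) - s - 1 := by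
    rw [Nat.cast_sub (by omega), Nat.cast_sub (by omega), Nat.cast_one]
  have hM : (0:ℝ) < (M.factorial : ℝ) := by positivity
  have hM1 : (0:ℝ) < ((M:ℝ) + 1) := by positivity
  push_cast
  rw [hc]
  field_simp
  ring

private lemma sum_coeff {ι : Type*} [DecidableEq ι] (t : Finset ι) :
    ∑ S ∈ t.powerset,
      (S.card.factorial : ℝ) * ((t.card - S.card).factorial : ℝ) / ((t.card + 1).factorial : ℝ)
      = 1 := by
  rw [Finset.sum_powerset]
  have h1 : ∀ j ∈ Finset.range (t.card + 1),
      (∑ S ∈ t.powersetCard j,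
        (S.card.factorial : ℝ) * ((t.card - S.card).factorial : ℝ) / ((t.card + 1).factorial : ℝ))
      = 1 / ((t.card : ℝ) + 1) := by
    intro j hj
    rw [Finset.mem_range] at hj
    have hj' : j ≤ t.card := Nat.lt_succ_iff.mp hj
    have hcongr : ∀ S ∈ t.powersetCard j,
        (S.card.factorial : ℝ) * ((t.card - S.card).factorial : ℝ) / ((t.card + 1).factorial : ℝ)
        = (j.factorial : ℝ) * ((t.card - j).factorial : ℝ) / ((t.card + 1).factorial : ℝ) := by
      intro S hS
      rw [(Finset.mem_powersetCard.mp hS).2]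
    rw [Finset.sum_congr rfl hcongr, Finset.sum_const, Finset.card_powersetCard, nsmul_eq_mul]
    have hch : ((t.card.choose j : ℕ) : ℝ) * ((j.factorial : ℝ) * ((t.card - j).factorial : ℝ))
        = (t.card.factorial : ℝ) := by
      rw [← mul_assoc]
      exact_mod_cast congrArg (Nat.cast (R := ℝ)) (Nat.choose_mul_factorial_mul_factorial hj')
    rw [Nat.factorial_succ t.card]
    have h0 : (0:ℝ) < (t.card : ℝ) + 1 := by positivity
    have h2 : (0:ℝ) < (t.card.factorial : ℝ) := by positivity
    push_cast
    field_simp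
    push_cast at hch
    linear_combination hch
  rw [Finset.sum_congr rfl h1, Finset.sum_const, Finset.card_range, nsmul_eq_mul]
  have h0 : (0:ℝ) < (t.card : ℝ) + 1 := by positivity
  push_cast
  field_simp

private lemma arith (T aa A w : ℝ) (hT0 : 0 ≤ T) (hTa : T ≤ aa) (haA : aa ≤ A) (hAw : A ≤ w)
    (hw : 0 < w) :
    2 * ((1 / (w + aa)) * T) * (A + aa) ≤ (1 / w) * T * A + aa := by
  have ha0 : 0 ≤ aa := le_trans hT0 hTa
  have h1 : 0 < w + aa := by linarith
  have hS1 : 0 ≤ (aa - T) * (w * A + 2 * w * aa - A * aa) := by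
    apply mul_nonneg (by linarith)
    nlinarith
  have hS2 : 0 ≤ aa * (w - A) * (w - aa) := by
    apply mul_nonneg (mul_nonneg ha0 (by linarith)) (by nlinarith)
  have hmain : 2 * T * (A + aa) * w ≤ (T * A + aa * w) * (w + aa) := by nlinarith
  have h2 : 2 * ((1 / (w + aa)) * T) * (A + aa) = (2 * T * (A + aa) * w) / ((w + aa) * w) := by
    field_simp
  have h3 : (1 / w) * T * A + aa = ((T * A + aa * w) * (w + aa)) / ((w + aa) * w) := by
    field_simp
  rw [h2, h3]
  exact div_le_div_of_nonneg_right hmain (by positivity) |>.trans_eq rfl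

private lemma funion_singleton {α : Type*} [DecidableEq α] {a : α} {s : Finset α} :
    s ∪ {a} = insert a s := by
  ext x; simp [or_comm]


/-- The multi-task characteristic function
`w(S) = Σ_{j∈D} g_j(S) + Σ_{k∈S} (g_k(S) − g_k({k}))`, where `D` indexes the
distinct validation tasks. -/
noncomputable def multiTaskValue {ι : Type*} [DecidableEq ι] (D : Finset ι)
    (g : ι → Finset ι → ℝ) (S : Finset ι) : ℝ :=
  ∑ j ∈ D, g j S + ∑ k ∈ S, (g k S - g k {k})

/-- The normalized Shapley value of party `i` for the characteristic function `v`
in the market `market` with `m = |market|` parties: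
`φ(v,i) = (1/v(market)) · Σ_{S ⊆ market \ {i}} (|S|!(m−|S|−1)!/m!) · (v(S∪{i}) − v(S))`. -/
noncomputable def shapley {ι : Type*} [DecidableEq ι] (market : Finset ι)
    (v : Finset ι → ℝ) (i : ι) : ℝ :=
  (1 / v market) * ∑ S ∈ (market.erase i).powerset,
    (S.card.factorial * (market.card - S.card - 1).factorial : ℝ)
      / (market.card.factorial : ℝ) * (v (insert i S) - v S)

/-- multi-task market is robust to replication: for nonnegative,
monotone and supermodular gain functions `g_k` with `g_{i'} = g_i` satisfying the
replica property with respect to `{i, i'}` and `w(N) > 0`, the payoff of party `i`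
after replicating itself once does not exceed its payoff in the original market:
`2·φ^R(i)·(A + a_i) ≤ φ(i)·A + a_i`. -/
theorem multiTask_robust_to_replication {ι : Type*} [DecidableEq ι] (N : Finset ι)
    (M : ℕ) (hcard : N.card = M) (hM : 1 ≤ M)
    (i : ι) (hi : i ∈ N) (i' : ι) (hi' : i' ∉ N)
    (NR : Finset ι) (hNR : NR = insert i' N)
    (D : Finset ι) (hD : D ⊆ N)
    (g : ι → Finset ι → ℝ)
    (hg_nonneg : ∀ k ∈ NR, ∀ S ⊆ NR, 0 ≤ g k S)
    (hg_mono : ∀ k ∈ NR, ∀ R Q : Finset ι, R ⊆ Q → Q ⊆ NR → g k R ≤ g k Q)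
    (hg_super : ∀ k ∈ NR, ∀ R Q : Finset ι, R ⊆ Q → Q ⊆ NR → ∀ x ∈ NR \ Q,
      g k (insert x R) - g k R ≤ g k (insert x Q) - g k Q)
    (hgi' : g i' = g i)
    (hrep : ∀ j ∈ NR, ∀ S ⊆ NR,
      g j (S ∪ {i}) = g j (S ∪ {i'}) ∧ g j (S ∪ {i'}) = g j (S ∪ {i, i'}))
    (a : ι → ℝ) (ha : ∀ j ∈ N, a j = g j N - g j {j})
    (A : ℝ) (hA : A = ∑ j ∈ N, a j)
    (hwN : 0 < multiTaskValue D g N) :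
    2 * shapley NR (multiTaskValue D g) i * (A + a i)
      ≤ shapley N (multiTaskValue D g) i * A + a i := by
  classical
  subst hNR
  have hii : i ≠ i' := fun h => hi' (h ▸ hi)
  have hiNR : i ∈ insert i' N := mem_insert_of_mem hi
  have hi'NR : i' ∈ insert i' N := mem_insert_self i' N
  have hNsub : N ⊆ insert i' N := subset_insert i' N
  -- base case of the key lemma: i, i' both outside S
  have base : ∀ j ∈ insert i' N, ∀ S ⊆ insert i' N, i ∉ S → i' ∉ S →
      g j (insert i S) = g j S ∧ g j (insert i' S) = g j S := by
    intro j hj S hS hiS hi'S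
    obtain ⟨h1, h2⟩ := hrep j hj S hS
    rw [funion_singleton, funion_singleton] at h1
    have e2 : S ∪ {i, i'} = insert i' (insert i S) := by
      rw [union_insert, funion_singleton, Finset.insert_comm]
    rw [funion_singleton, e2] at h2
    have hmono : g j S ≤ g j (insert i' S) :=
      hg_mono j hj S (insert i' S) (subset_insert _ _) (insert_subset hi'NR hS)
    have hsub2 : insert i S ⊆ insert i' N := insert_subset hiNR hS
    have hi'notin : i' ∉ insert i S := by
      simp only [mem_insert, not_or]
      exact ⟨fun h => hii h.symm, hi'S⟩
    have hsup := hg_super j hj S (insert i S) (subset_insert _ _) hsub2 i'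
      (mem_sdiff.mpr ⟨hi'NR, hi'notin⟩)
    have heq : g j (insert i' S) = g j S := le_antisymm (by linarith) hmono
    exact ⟨by linarith, heq⟩
  -- key lemma: inserting i or i' never changes the value
  have key : ∀ j ∈ insert i' N, ∀ S ⊆ insert i' N,
      g j (insert i S) = g j S ∧ g j (insert i' S) = g j S := by
    intro j hj S hS
    by_cases hiS : i ∈ S <;> by_cases hi'S : i' ∈ S
    · rw [insert_eq_self.2 hiS, insert_eq_self.2 hi'S]
      exact ⟨rfl, rfl⟩
    · refine ⟨by rw [insert_eq_self.2 hiS], ?_⟩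
      have hSeq : S = insert i (S.erase i) := (insert_erase hiS).symm
      have hS0sub : S.erase i ⊆ insert i' N := (erase_subset _ _).trans hS
      have hiS0 : i ∉ S.erase i := notMem_erase _ _
      have hi'S0 : i' ∉ S.erase i := fun h => hi'S (mem_of_mem_erase h)
      obtain ⟨b1, b2⟩ := base j hj (S.erase i) hS0sub hiS0 hi'S0
      obtain ⟨h1, h2⟩ := hrep j hj (S.erase i) hS0sub
      rw [funion_singleton, funion_singleton] at h1
      have e2 : S.erase i ∪ {i, i'} = insert i' (insert i (S.erase i)) := by
        rw [union_insert, funion_singleton, Finset.insert_comm]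
      rw [funion_singleton, e2] at h2
      rw [hSeq, ← h2, b2, b1]
    · refine ⟨?_, by rw [insert_eq_self.2 hi'S]⟩
      have hSeq : S = insert i' (S.erase i') := (insert_erase hi'S).symm
      have hS0sub : S.erase i' ⊆ insert i' N := (erase_subset _ _).trans hS
      have hiS0 : i ∉ S.erase i' := fun h => hiS (mem_of_mem_erase h)
      have hi'S0 : i' ∉ S.erase i' := notMem_erase _ _
      obtain ⟨b1, b2⟩ := base j hj (S.erase i') hS0sub hiS0 hi'S0
      obtain ⟨h1, h2⟩ := hrep j hj (S.erase i') hS0sub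
      rw [funion_singleton, funion_singleton] at h1
      have e2 : S.erase i' ∪ {i, i'} = insert i' (insert i (S.erase i')) := by
        rw [union_insert, funion_singleton, Finset.insert_comm]
      rw [funion_singleton, e2] at h2
      rw [hSeq, Finset.insert_comm, ← h2]
    · exact base j hj S hS hiS hi'S
  have hgii : g i {i} = g i ∅ := by
    have := (key i hiNR ∅ (empty_subset _)).1
    simpa using this
  have hgii' : g i {i'} = g i ∅ := by
    have := (key i hiNR ∅ (empty_subset _)).2
    simpa using this
  -- marginal contribution of i
  have marg : ∀ S ⊆ insert i' N, i ∉ S →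
      multiTaskValue D g (insert i S) = multiTaskValue D g S + (g i S - g i ∅) := by
    intro S hS hiS
    simp only [multiTaskValue]
    rw [sum_insert hiS]
    have hD' : ∀ j ∈ D, g j (insert i S) = g j S := fun j hj =>
      (key j (hNsub (hD hj)) S hS).1
    have hS' : ∀ k ∈ S, g k (insert i S) - g k {k} = g k S - g k {k} := fun k hk => by
      rw [(key k (hS hk) S hS).1]
    rw [sum_congr rfl hD', sum_congr rfl hS', (key i hiNR S hS).1, hgii]
    ring
  -- marginal contribution of i'
  have marg' : ∀ S ⊆ insert i' N, i' ∉ S →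
      multiTaskValue D g (insert i' S) = multiTaskValue D g S + (g i S - g i ∅) := by
    intro S hS hi'S
    simp only [multiTaskValue]
    rw [sum_insert hi'S]
    have hD' : ∀ j ∈ D, g j (insert i' S) = g j S := fun j hj =>
      (key j (hNsub (hD hj)) S hS).2
    have hS' : ∀ k ∈ S, g k (insert i' S) - g k {k} = g k S - g k {k} := fun k hk => by
      rw [(key k (hS hk) S hS).2]
    rw [sum_congr rfl hD', sum_congr rfl hS', hgi', (key i hiNR S hS).2, hgii']
    ring
  have hai : a i = g i N - g i ∅ := by rw [ha i hi, hgii]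
  have hwNR : multiTaskValue D g (insert i' N) = multiTaskValue D g N + a i := by
    rw [marg' N (subset_insert _ _) hi', hai]
  have hMcard : (insert i' N).card = M + 1 := by rw [card_insert_of_notMem hi', hcard]
  have hE : (N.erase i).card = M - 1 := by rw [card_erase_of_mem hi, hcard]
  -- the common sum T
  set T : ℝ := ∑ S ∈ (N.erase i).powerset,
      (S.card.factorial : ℝ) * ((M - S.card - 1).factorial : ℝ) / (M.factorial : ℝ)
        * (g i S - g i ∅) with hT
  have hEsubNR : N.erase i ⊆ insert i' N := (erase_subset _ _).trans hNsub
  -- shapley on N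
  have hshapN : shapley N (multiTaskValue D g) i = (1 / multiTaskValue D g N) * T := by
    simp only [shapley, hT]
    rw [hcard]
    congr 1
    refine sum_congr rfl fun S hS => ?_
    rw [mem_powerset] at hS
    have hSN : S ⊆ insert i' N := hS.trans hEsubNR
    have hiS : i ∉ S := fun h => (notMem_erase i N) (hS h)
    rw [marg S hSN hiS]
    ring
  -- shapley on NR
  have hNRerase : (insert i' N).erase i = insert i' (N.erase i) :=
    erase_insert_of_ne hii.symm
  have hi'E : i' ∉ N.erase i := fun h => hi' (mem_of_mem_erase h)
  have hshapNR : shapley (insert i' N) (multiTaskValue D g) i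
      = (1 / (multiTaskValue D g N + a i)) * T := by
    simp only [shapley, hT]
    rw [hNRerase, Finset.sum_powerset_insert hi'E, hMcard, hwNR, ← sum_add_distrib]
    congr 1
    refine sum_congr rfl fun S hS => ?_
    rw [mem_powerset] at hS
    have hs1 : S.card + 1 ≤ M := by
      have h := card_le_card hS
      omega
    have hSN : S ⊆ insert i' N := hS.trans hEsubNR
    have hiS : i ∉ S := fun h => (notMem_erase i N) (hS h)
    have hi'S : i' ∉ S := fun h => hi'E (hS h)
    have hcard2 : (insert i' S).card = S.card + 1 := card_insert_of_notMem hi'S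
    have hSi'N : insert i' S ⊆ insert i' N :=
      insert_subset hi'NR (hS.trans ((erase_subset _ _).trans hNsub))
    have hiSi' : i ∉ insert i' S := by
      simp only [mem_insert, not_or]
      exact ⟨hii, hiS⟩
    have e1 : M + 1 - S.card - 1 = M - S.card := by omega
    have e2 : M + 1 - (S.card + 1) - 1 = M - S.card - 1 := by omega
    rw [marg S hSN hiS, marg (insert i' S) hSi'N hiSi', hcard2, (key i hiNR S hSN).2, e1, e2]
    have hcs := coeff_split M S.card hs1
    linear_combination (g i S - g i ∅) * hcs
  -- bounds
  have hsum1 : ∑ S ∈ (N.erase i).powerset,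
      (S.card.factorial : ℝ) * ((M - S.card - 1).factorial : ℝ) / (M.factorial : ℝ) = 1 := by
    rw [← sum_coeff (N.erase i)]
    refine sum_congr rfl fun S hS => ?_
    have e3 : M - S.card - 1 = (N.erase i).card - S.card := by omega
    have e4 : M = (N.erase i).card + 1 := by omega
    rw [e3, e4]
  have hSsubN : ∀ S ∈ (N.erase i).powerset, S ⊆ N := fun S hS =>
    (mem_powerset.mp hS).trans (erase_subset _ _)
  have hT0 : 0 ≤ T := by
    rw [hT]
    refine sum_nonneg fun S hS => ?_
    have hm := hg_mono i hiNR ∅ S (empty_subset _) ((hSsubN S hS).trans hNsub)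
    have : (0:ℝ) ≤ (S.card.factorial : ℝ) * ((M - S.card - 1).factorial : ℝ) / (M.factorial : ℝ) := by
      positivity
    nlinarith
  have hTa : T ≤ a i := by
    rw [hT]
    calc ∑ S ∈ (N.erase i).powerset,
          (S.card.factorial : ℝ) * ((M - S.card - 1).factorial : ℝ) / (M.factorial : ℝ)
            * (g i S - g i ∅)
        ≤ ∑ S ∈ (N.erase i).powerset,
          (S.card.factorial : ℝ) * ((M - S.card - 1).factorial : ℝ) / (M.factorial : ℝ)
            * a i := by
          refine sum_le_sum fun S hS => ?_
          have hm := hg_mono i hiNR S N (hSsubN S hS) hNsub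
          have hfa : g i S - g i ∅ ≤ a i := by rw [hai]; linarith
          exact mul_le_mul_of_nonneg_left hfa (by positivity)
      _ = a i := by rw [← sum_mul, hsum1, one_mul]
  have haj0 : ∀ j ∈ N, 0 ≤ a j := by
    intro j hj
    rw [ha j hj]
    have := hg_mono j (hNsub hj) {j} N (singleton_subset_iff.2 hj) hNsub
    linarith
  have haA : a i ≤ A := by
    rw [hA, ← Finset.add_sum_erase N a hi]
    have : 0 ≤ ∑ j ∈ N.erase i, a j := sum_nonneg fun j hj => haj0 j (mem_of_mem_erase hj)
    linarith
  have hAw : A ≤ multiTaskValue D g N := by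
    rw [hA]
    simp only [multiTaskValue]
    have h1 : ∑ j ∈ N, a j = ∑ k ∈ N, (g k N - g k {k}) := sum_congr rfl fun j hj => ha j hj
    have h2 : 0 ≤ ∑ j ∈ D, g j N := sum_nonneg fun j hj =>
      hg_nonneg j (hNsub (hD hj)) N hNsub
    linarith [h1.le, h1.ge]
  rw [hshapN, hshapNR]
  exact arith T (a i) A (multiTaskValue D g N) hT0 hTa haA hAw hwN
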